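/- In a Naive Bayes model with independent availability mechanisms, where p(b, a, z, y) = (∏_{i=1}^n p(b_i | y))·(∏_{i=1}^r p(z_i | y)·p(a_i | z_i, y))·p(y), the odds for any set I of available features factor as odds(Y=1 | b, z_I, A_I=1) = (∏_{i=1}^n p(b_i|Y=1)/p(b_i|Y=0)) · (∏_{i∈I} [p(z_i|Y=1)p(A_i=1|z_i,Y=1)] / [p(z_i|Y=0)p(A_i=1|z_i,Y=0)]) · p(Y=1)/p(Y=0). -/

import Mathlib

open Finset

/-- Naive Bayes with independent availability mechanisms:
`p(b, a, z, y) = (∏ i, p(b_i|y)) (∏ j, p(z_j|y) p(a_j|z_j,y)) p(y)`. For any set `I` of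
available features, the odds of `Y=1` given `b`, `z_I` and `A_I = 1` factor into the
base-feature likelihood ratios, the per-feature value/availability ratios on `I`, and the
prior odds. -/
theorem naive_bayes_odds
    {βb ζ : Type*} [Fintype ζ] [DecidableEq ζ] {n r : ℕ}
    (pY : Bool → ℝ) (pB : Bool → Fin n → βb → ℝ)
    (pZ : Bool → Fin r → ζ → ℝ) (pA : Bool → Fin r → ζ → Bool → ℝ)
    (q : Bool × (Fin n → βb) × (Fin r → ζ × Bool) → ℝ)
    (hq : ∀ y bv f, q (y, bv, f)
      = pY y * (∏ i, pB y i (bv i)) * ∏ j, pZ y j (f j).1 * pA y j (f j).1 (f j).2)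
    (hsum : ∀ y j, ∑ za : ζ × Bool, pZ y j za.1 * pA y j za.1 za.2 = 1)
    (hnonneg : ∀ y j zv av, 0 ≤ pZ y j zv * pA y j zv av)
    (bv : Fin n → βb) (z : Fin r → ζ) (I : Finset (Fin r))
    (hY0 : 0 < pY false) (hB0 : ∀ i, 0 < pB false i (bv i))
    (hZA0 : ∀ i ∈ I, 0 < pZ false i (z i) * pA false i (z i) true) :
    (∑ f ∈ univ.filter (fun f : Fin r → ζ × Bool => ∀ i ∈ I, f i = (z i, true)),
        q (true, bv, f))
      / (∑ f ∈ univ.filter (fun f : Fin r → ζ × Bool => ∀ i ∈ I, f i = (z i, true)),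
        q (false, bv, f))
    = (∏ i, pB true i (bv i) / pB false i (bv i))
      * (∏ i ∈ I, (pZ true i (z i) * pA true i (z i) true)
          / (pZ false i (z i) * pA false i (z i) true))
      * (pY true / pY false) := by
  have key : ∀ y, (∑ f ∈ univ.filter (fun f : Fin r → ζ × Bool => ∀ i ∈ I, f i = (z i, true)),
        q (y, bv, f))
      = pY y * (∏ i, pB y i (bv i)) * ∏ i ∈ I, pZ y i (z i) * pA y i (z i) true := by
    intro y
    have hset : univ.filter (fun f : Fin r → ζ × Bool => ∀ i ∈ I, f i = (z i, true))
        = Fintype.piFinset (fun i => if i ∈ I then ({(z i, true)} : Finset (ζ × Bool)) else univ) := by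
      ext f
      simp only [mem_filter, Fintype.mem_piFinset, mem_univ, true_and]
      constructor
      · intro h i
        by_cases hi : i ∈ I <;> simp [hi, h i]
      · intro h i hi
        simpa [hi] using h i
    rw [hset]
    simp only [hq]
    rw [← Finset.mul_sum,
      ← Finset.prod_univ_sum (t := fun i => if i ∈ I then ({(z i, true)} : Finset (ζ × Bool)) else univ)
        (f := fun j a => pZ y j a.1 * pA y j a.1 a.2)]
    congr 1
    have h1 : ∀ i : Fin r,
        (∑ j ∈ (if i ∈ I then ({(z i, true)} : Finset (ζ × Bool)) else univ),
          pZ y i j.1 * pA y i j.1 j.2)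
        = if i ∈ I then pZ y i (z i) * pA y i (z i) true else 1 := by
      intro i
      by_cases hi : i ∈ I <;> simp [hi, hsum y i]
    simp only [h1]
    rw [Finset.prod_ite_mem, Finset.univ_inter]
  rw [key true, key false]
  have hP : (0:ℝ) < ∏ i, pB false i (bv i) := Finset.prod_pos fun i _ => hB0 i
  have hQ : (0:ℝ) < ∏ i ∈ I, pZ false i (z i) * pA false i (z i) true :=
    Finset.prod_pos hZA0
  rw [Finset.prod_div_distrib, Finset.prod_div_distrib]
  field_simp
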